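/- Define T(t,y) as the infimum over all v-Lipschitz curves y_T with y_T(t) = y of min{τ ≥ t : ρ(τ, y_T(τ)) ≤ ℓ}. Then T(t,y) = min{τ ≥ t : ρ(τ, y) ≤ v(τ − t) + ℓ}, where both sides are interpreted as +∞ if the defining sets are empty. -/

import Mathlib

open scoped ENNReal

/-- Lemma 3 of the paper: the best universal lower estimator
`T(t,y)`, defined as the infimum over all `v`-Lipschitz target trajectories
passing through `y` at time `t` of the first time `τ ≥ t` with
`ρ(τ, y_T(τ)) ≤ ℓ`, equals the first time `τ ≥ t` with
`ρ(τ, y) ≤ v(τ - t) + ℓ`.  Infima are taken in `EReal`, so that both sides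
are `+∞` when the corresponding sets are empty. -/
theorem best_estimator_eq {Y : Type*} [NormedAddCommGroup Y] [NormedSpace ℝ Y]
    [FiniteDimensional ℝ Y]
    (R : ℝ → Set Y)
    (hne : ∀ s, 0 ≤ s → (R s).Nonempty)
    (hcomp : ∀ s, 0 ≤ s → IsCompact (R s))
    (ρ : ℝ → Y → ℝ) (hρ : ∀ s y, ρ s y = Metric.infDist y (R s))
    (ℓ v : ℝ) (hℓ : 0 ≤ ℓ) (hv : 0 ≤ v)
    (t : ℝ) (ht : 0 ≤ t) (y : Y) :
    (⨅ yT : {f : ℝ → Y // LipschitzOnWith (Real.toNNReal v) f (Set.Ici (0 : ℝ)) ∧ f t = y},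
        sInf {s : EReal | ∃ τ : ℝ, s = (τ : EReal) ∧ t ≤ τ ∧ ρ τ (yT.1 τ) ≤ ℓ})
      = sInf {s : EReal | ∃ τ : ℝ, s = (τ : EReal) ∧ t ≤ τ ∧ ρ τ y ≤ v * (τ - t) + ℓ} := by
  have hvco : ((Real.toNNReal v : ℝ)) = v := Real.coe_toNNReal v hv
  apply le_antisymm
  · -- LHS ≤ RHS : for each admissible τ, construct a curve reaching the target
    apply le_sInf
    rintro s ⟨τ, rfl, htτ, hρτ⟩
    have hτ0 : (0 : ℝ) ≤ τ := ht.trans htτ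
    rw [hρ] at hρτ
    obtain ⟨η, hηmem, hηd⟩ :=
      (hcomp τ hτ0).exists_infDist_eq_dist (hne τ hτ0) y
    set d : ℝ := dist y η with hd
    have hdd : d ≤ v * (τ - t) + ℓ := hηd ▸ hρτ
    by_cases hdz : d = 0
    · -- y is already at the target: constant curve
      refine iInf_le_of_le
        ⟨fun _ => y, ((LipschitzWith.const y).weaken zero_le).lipschitzOnWith, rfl⟩ ?_
      refine sInf_le ⟨τ, rfl, htτ, ?_⟩
      rw [hρ, hηd, hdz]
      exact hℓ
    · have hdpos : 0 < d := lt_of_le_of_ne dist_nonneg (Ne.symm hdz)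
      have hnorm : ‖η - y‖ = d := by rw [norm_sub_rev, hd, dist_eq_norm]
      set g : ℝ → ℝ := fun s => min (max (v * (s - t)) 0) d with hg
      set f : ℝ → Y := fun s => y + (g s / d) • (η - y) with hf
      have hgl : ∀ a b : ℝ, |g a - g b| ≤ v * |a - b| := by
        intro a b
        have h1 : |g a - g b| ≤ |max (v * (a - t)) 0 - max (v * (b - t)) 0| := by
          have := abs_min_sub_min_le_max (max (v * (a - t)) 0) d (max (v * (b - t)) 0) d
          simpa using this
        have h2 : |max (v * (a - t)) 0 - max (v * (b - t)) 0| ≤ |v * (a - t) - v * (b - t)| :=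
          abs_max_sub_max_le_abs _ _ _
        have h3 : |v * (a - t) - v * (b - t)| = v * |a - b| := by
          rw [show v * (a - t) - v * (b - t) = v * (a - b) by ring, abs_mul, abs_of_nonneg hv]
        linarith
      have hfl : LipschitzWith (Real.toNNReal v) f := by
        apply LipschitzWith.of_dist_le_mul
        intro a b
        have hsub : f a - f b = ((g a - g b) / d) • (η - y) := by
          simp only [hf]
          rw [sub_div, sub_smul]
          abel
        rw [dist_eq_norm, hsub, norm_smul, hnorm, hvco, Real.norm_eq_abs, abs_div,
          abs_of_nonneg hdpos.le, div_mul_cancel₀ _ hdpos.ne']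
        rw [Real.dist_eq]
        exact hgl a b
      have hgt : g t = 0 := by
        simp [hg, min_eq_left hdpos.le]
      have hft : f t = y := by
        simp [hf, hgt]
      refine iInf_le_of_le ⟨f, hfl.lipschitzOnWith, hft⟩ ?_
      refine sInf_le ⟨τ, rfl, htτ, ?_⟩
      have hsub : f τ - η = (g τ / d - 1) • (η - y) := by
        simp only [hf]
        rw [sub_smul, one_smul]
        abel
      have hgle : g τ ≤ d := min_le_right _ _
      have hdist : dist (f τ) η = d - g τ := by
        rw [dist_eq_norm, hsub, norm_smul, hnorm, Real.norm_eq_abs,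
          abs_of_nonpos (by rw [sub_nonpos, div_le_one hdpos]; exact hgle)]
        field_simp
        ring
      have hρle : Metric.infDist (f τ) (R τ) ≤ dist (f τ) η :=
        Metric.infDist_le_dist_of_mem hηmem
      rw [hρ]
      have hgτ : g τ = min (v * (τ - t)) d := by
        simp only [hg]
        rw [max_eq_left (by nlinarith)]
      have hfin : d - g τ ≤ ℓ := by
        rw [hgτ]
        rcases min_cases (v * (τ - t)) d with ⟨h, _⟩ | ⟨h, _⟩ <;> rw [h] <;> linarith
      linarith
  · -- RHS ≤ LHS : each curve's capture set is contained in the relaxed set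
    apply le_iInf
    rintro ⟨f, hfLip, hft⟩
    apply sInf_le_sInf
    rintro s ⟨τ, rfl, htτ, hρτ⟩
    refine ⟨τ, rfl, htτ, ?_⟩
    have hρτ' : Metric.infDist (f τ) (R τ) ≤ ℓ := by
      rw [hρ] at hρτ; exact hρτ
    have hτ0 : (0 : ℝ) ≤ τ := ht.trans htτ
    have hdist : dist (f t) (f τ) ≤ v * (τ - t) := by
      have := hfLip.dist_le_mul t (Set.mem_Ici.mpr ht) τ (Set.mem_Ici.mpr hτ0)
      rw [hvco, Real.dist_eq, abs_of_nonpos (by linarith)] at this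
      linarith
    have h1 : Metric.infDist (f t) (R τ) ≤ Metric.infDist (f τ) (R τ) + dist (f t) (f τ) :=
      Metric.infDist_le_infDist_add_dist
    rw [hρ, ← hft]
    linarith
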